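/- Let H : (0, ∞) → [0, ∞) be convex and satisfy lim_{t→∞} H(t)/t = ∞ and lim_{s→0⁺} H(s) = ∞. If ∫_{ρ=0}^{1/2} ∫_{t=1/2}^{1} H( (1−ρ)²·ρ^{-2}·t³ )·ρ² dt dρ < ∞, then ∫_{s=1}^{∞} H(s)·s^{-5/2} ds < ∞. -/

import Mathlib

open MeasureTheory Filter Topology

open scoped ENNReal

/-- 1D version of the change of variables formula for lower Lebesgue integrals. -/
theorem lintegral_image_eq_lintegral_abs_deriv_mul17 {s : Set ℝ} {f f' : ℝ → ℝ}
    (hs : MeasurableSet s) (hf' : ∀ x ∈ s, HasDerivWithinAt f (f' x) s x)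
    (hf : Set.InjOn f s) (g : ℝ → ℝ≥0∞) :
    ∫⁻ x in f '' s, g x = ∫⁻ x in s, ENNReal.ofReal |f' x| * g (f x) := by
  simpa only [ContinuousLinearMap.det_toSpanSingleton] using
    MeasureTheory.lintegral_image_eq_lintegral_abs_det_fderiv_mul volume hs
      (fun x hx => (hf' x hx).hasFDerivWithinAt) hf g

/-- let `H : (0,∞) → [0,∞)` be convex with `H(t)/t → ∞` as `t → ∞` and
`H(s) → ∞` as `s → 0⁺`. If `∫₀^{1/2} ∫_{1/2}^{1} H((1−ρ)²·ρ^{-2}·t³)·ρ² dt dρ < ∞`,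
then `∫₁^∞ H(s)·s^{-5/2} ds < ∞`. -/
theorem integrability_H_at_infinity (H : ℝ → ℝ)
    (hH0 : ∀ x ∈ Set.Ioi (0 : ℝ), 0 ≤ H x)
    (hconv : ConvexOn ℝ (Set.Ioi 0) H)
    (hinfty : Tendsto (fun t => H t / t) atTop atTop)
    (h0 : Tendsto H (𝓝[>] 0) atTop)
    (hfin : (∫⁻ ρ in Set.Ioo (0 : ℝ) (1 / 2), ∫⁻ t in Set.Ioo (1 / 2 : ℝ) 1,
        ENNReal.ofReal (H ((1 - ρ) ^ 2 * (ρ ^ 2)⁻¹ * t ^ 3) * ρ ^ 2)) < ⊤) :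
    (∫⁻ s in Set.Ioi (1 : ℝ), ENNReal.ofReal (H s * s ^ (-(5 : ℝ) / 2))) < ⊤ := by
  have hHcont : ContinuousOn H (Set.Ioi 0) := hconv.continuousOn isOpen_Ioi
  set A : Set ℝ := Set.Ioo (0 : ℝ) (1 / 2) with hA
  set B : Set ℝ := Set.Ioo (1 / 2 : ℝ) 1 with hB
  -- continuity of the integrand on `A ×ˢ B`
  have hgc : ContinuousOn (fun p : ℝ × ℝ => (1 - p.1) ^ 2 * (p.1 ^ 2)⁻¹ * p.2 ^ 3) (A ×ˢ B) := by
    apply ContinuousOn.mul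
    · apply ContinuousOn.mul
      · exact ((continuous_const.sub continuous_fst).pow 2).continuousOn
      · refine ((continuous_fst.pow 2).continuousOn).inv₀ ?_
        intro p hp
        have h1 : (0 : ℝ) < p.1 := hp.1.1
        exact pow_ne_zero 2 h1.ne'
    · exact (continuous_snd.pow 3).continuousOn
  have hmaps : Set.MapsTo (fun p : ℝ × ℝ => (1 - p.1) ^ 2 * (p.1 ^ 2)⁻¹ * p.2 ^ 3) (A ×ˢ B)
      (Set.Ioi 0) := by
    intro p hp
    have h1 : 0 < p.1 := hp.1.1
    have h2 : p.1 < 1 / 2 := hp.1.2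
    have h3 : (1 : ℝ) / 2 < p.2 := hp.2.1
    have h4 : (0 : ℝ) < 1 - p.1 := by linarith
    have h5 : (0 : ℝ) < p.2 := by linarith
    exact mul_pos (mul_pos (pow_pos h4 2) (inv_pos.2 (pow_pos h1 2))) (pow_pos h5 3)
  have hkc : ContinuousOn
      (fun p : ℝ × ℝ => ENNReal.ofReal (H ((1 - p.1) ^ 2 * (p.1 ^ 2)⁻¹ * p.2 ^ 3) * p.1 ^ 2))
      (A ×ˢ B) := by
    apply ENNReal.continuous_ofReal.comp_continuousOn
    exact (hHcont.comp hgc hmaps).mul ((continuous_fst.pow 2).continuousOn)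
  have hmeas : AEMeasurable
      (Function.uncurry fun ρ t : ℝ =>
        ENNReal.ofReal (H ((1 - ρ) ^ 2 * (ρ ^ 2)⁻¹ * t ^ 3) * ρ ^ 2))
      ((volume.restrict A).prod (volume.restrict B)) := by
    rw [Measure.prod_restrict, ← Measure.volume_eq_prod]
    exact hkc.aemeasurable (measurableSet_Ioo.prod measurableSet_Ioo)
  have hswap : (∫⁻ t in B, ∫⁻ ρ in A,
      ENNReal.ofReal (H ((1 - ρ) ^ 2 * (ρ ^ 2)⁻¹ * t ^ 3) * ρ ^ 2)) < ⊤ := by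
    rw [← lintegral_lintegral_swap hmeas]
    exact hfin
  -- choose a good `t₀`
  have hex : ∃ t₀ ∈ B, (∫⁻ ρ in A,
      ENNReal.ofReal (H ((1 - ρ) ^ 2 * (ρ ^ 2)⁻¹ * t₀ ^ 3) * ρ ^ 2)) < ⊤ := by
    by_contra hcon
    push_neg at hcon
    have htop : (∫⁻ t in B, ∫⁻ ρ in A,
        ENNReal.ofReal (H ((1 - ρ) ^ 2 * (ρ ^ 2)⁻¹ * t ^ 3) * ρ ^ 2)) = ⊤ := by
      rw [setLIntegral_congr_fun measurableSet_Ioo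
        (fun t ht => top_le_iff.mp (hcon t ht))]
      rw [setLIntegral_const, Real.volume_Ioo]
      rw [ENNReal.top_mul (by simp; norm_num)]
    rw [htop] at hswap
    exact absurd hswap (by simp)
  obtain ⟨t₀, ht₀, hG⟩ := hex
  have ht1 : (1 / 2 : ℝ) < t₀ := ht₀.1
  have ht2 : t₀ < 1 := ht₀.2
  have ht0pos : (0 : ℝ) < t₀ := by linarith
  set f : ℝ → ℝ := fun ρ => (1 - ρ) ^ 2 * (ρ ^ 2)⁻¹ * t₀ ^ 3 with hfdef
  set f' : ℝ → ℝ := fun ρ => (-2) * (1 - ρ) * (ρ ^ 3)⁻¹ * t₀ ^ 3 with hf'def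
  have hderiv : ∀ ρ ∈ A, HasDerivAt f (f' ρ) ρ := by
    intro ρ hρ
    have hρ0 : ρ ≠ 0 := ne_of_gt hρ.1
    have h1 : HasDerivAt (fun x : ℝ => (1 - x) ^ 2) (2 * (1 - ρ) ^ 1 * (0 - 1)) ρ :=
      ((hasDerivAt_const ρ (1 : ℝ)).sub (hasDerivAt_id ρ)).pow 2
    have h2 : HasDerivAt (fun x : ℝ => (x ^ 2)⁻¹) (-(2 * ρ ^ 1) / (ρ ^ 2) ^ 2) ρ :=
      (hasDerivAt_pow 2 ρ).inv (pow_ne_zero 2 hρ0)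
    have h3 := (h1.mul h2).mul_const (t₀ ^ 3)
    have hEq : f' ρ = (2 * (1 - ρ) ^ 1 * (0 - 1) * (ρ ^ 2)⁻¹
        + (1 - ρ) ^ 2 * (-(2 * ρ ^ 1) / (ρ ^ 2) ^ 2)) * t₀ ^ 3 := by
      simp only [hf'def]
      have h4 : (ρ ^ 2) ^ 2 ≠ 0 := by positivity
      field_simp
      ring
    rw [hEq]
    exact h3
  have hfpos : ∀ ρ ∈ A, 0 < f ρ := by
    intro ρ hρ
    have h4 : (0 : ℝ) < 1 - ρ := by
      have := hρ.2; rw [hA] at hρ; linarith [hρ.2]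
    exact mul_pos (mul_pos (pow_pos h4 2) (inv_pos.2 (pow_pos hρ.1 2))) (pow_pos ht0pos 3)
  have hanti : StrictAntiOn f A := by
    apply strictAntiOn_of_deriv_neg (convex_Ioo _ _)
    · exact fun ρ hρ => (hderiv ρ hρ).continuousAt.continuousWithinAt
    · intro ρ hρ
      rw [interior_Ioo] at hρ
      rw [(hderiv ρ hρ).deriv]
      have h1 : (0 : ℝ) < 1 - ρ := by linarith [hρ.2]
      have h2 : 0 < 2 * (1 - ρ) * (ρ ^ 3)⁻¹ * t₀ ^ 3 :=
        mul_pos (mul_pos (mul_pos two_pos h1) (inv_pos.2 (pow_pos hρ.1 3))) (pow_pos ht0pos 3)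
      have : f' ρ = -(2 * (1 - ρ) * (ρ ^ 3)⁻¹ * t₀ ^ 3) := by rw [hf'def]; ring
      rw [this]
      linarith
  have hinj : Set.InjOn f A := hanti.injOn
  have himg : Set.Ioi (1 : ℝ) ⊆ f '' A := by
    intro s hs
    have hs1 : (1 : ℝ) < s := hs
    have ht3 : (0 : ℝ) < t₀ ^ 3 := pow_pos ht0pos 3
    have ht3' : t₀ ^ 3 < 1 := pow_lt_one₀ ht0pos.le ht2 (by norm_num)
    set r := Real.sqrt (s / t₀ ^ 3) with hr
    have hsr : 1 < s / t₀ ^ 3 := (one_lt_div ht3).2 (by linarith)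
    have hr1 : 1 < r := by
      rw [hr, show (1 : ℝ) = Real.sqrt 1 by simp]
      exact Real.sqrt_lt_sqrt (by norm_num) hsr
    have hr0 : (0 : ℝ) < 1 + r := by linarith
    have hρ0 : ((1 + r)⁻¹ : ℝ) ≠ 0 := ne_of_gt (inv_pos.2 hr0)
    refine ⟨(1 + r)⁻¹, ⟨inv_pos.2 hr0, ?_⟩, ?_⟩
    · rw [show (1 : ℝ) / 2 = 2⁻¹ by norm_num]
      exact inv_strictAnti₀ two_pos (by linarith)
    · have h1ρ : 1 - (1 + r)⁻¹ = r * (1 + r)⁻¹ := by field_simp; ring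
      have hr2 : r ^ 2 = s / t₀ ^ 3 := Real.sq_sqrt (by positivity)
      have hne : (((1 + r)⁻¹ : ℝ)) ^ 2 ≠ 0 := pow_ne_zero _ hρ0
      show (1 - (1 + r)⁻¹) ^ 2 * (((1 + r)⁻¹) ^ 2)⁻¹ * t₀ ^ 3 = s
      rw [h1ρ, mul_pow]
      have : r ^ 2 * ((1 + r)⁻¹) ^ 2 * (((1 + r)⁻¹) ^ 2)⁻¹ * t₀ ^ 3 = r ^ 2 * t₀ ^ 3 := by
        field_simp
      rw [this, hr2, div_mul_cancel₀ s ht3.ne']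
  have key := lintegral_image_eq_lintegral_abs_deriv_mul17 (s := A) measurableSet_Ioo
      (fun x hx => (hderiv x hx).hasDerivWithinAt) hinj
      (fun s => ENNReal.ofReal (H s * s ^ (-(5 : ℝ) / 2)))
  have hpoint : ∀ ρ ∈ A,
      ENNReal.ofReal |f' ρ| * ENNReal.ofReal (H (f ρ) * (f ρ) ^ (-(5 : ℝ) / 2))
        ≤ ENNReal.ofReal 65536
            * ENNReal.ofReal (H ((1 - ρ) ^ 2 * (ρ ^ 2)⁻¹ * t₀ ^ 3) * ρ ^ 2) := by
    intro ρ hρ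
    obtain ⟨hρ1, hρ2⟩ := hρ
    have h1ρ : (0 : ℝ) < 1 - ρ := by linarith
    have hfρ : 0 < f ρ := hfpos ρ ⟨hρ1, hρ2⟩
    have hH : 0 ≤ H (f ρ) := hH0 _ hfρ
    have habs : |f' ρ| ≤ 2 * (ρ ^ 3)⁻¹ := by
      have h2 : 0 < 2 * (1 - ρ) * (ρ ^ 3)⁻¹ * t₀ ^ 3 :=
        mul_pos (mul_pos (mul_pos two_pos h1ρ) (inv_pos.2 (pow_pos hρ1 3))) (pow_pos ht0pos 3)
      have heq : |f' ρ| = 2 * (1 - ρ) * (ρ ^ 3)⁻¹ * t₀ ^ 3 := by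
        have : f' ρ = -(2 * (1 - ρ) * (ρ ^ 3)⁻¹ * t₀ ^ 3) := by rw [hf'def]; ring
        rw [this, abs_of_neg (by linarith)]
        ring
      rw [heq]
      have ht01 : t₀ ^ 3 ≤ 1 := pow_le_one₀ ht0pos.le ht2.le
      have hle : (1 - ρ) * t₀ ^ 3 ≤ 1 := by nlinarith
      calc 2 * (1 - ρ) * (ρ ^ 3)⁻¹ * t₀ ^ 3 = 2 * (ρ ^ 3)⁻¹ * ((1 - ρ) * t₀ ^ 3) := by ring
        _ ≤ 2 * (ρ ^ 3)⁻¹ * 1 := mul_le_mul_of_nonneg_left hle (by positivity)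
        _ = 2 * (ρ ^ 3)⁻¹ := by ring
    have hXlow : (32 * ρ ^ 2)⁻¹ ≤ f ρ := by
      have h14 : (1 / 4 : ℝ) ≤ (1 - ρ) ^ 2 := by nlinarith
      have h18 : (1 / 8 : ℝ) ≤ t₀ ^ 3 := by
        have := pow_le_pow_left₀ (by norm_num : (0:ℝ) ≤ 1/2) ht1.le 3
        norm_num at this
        linarith
      have step : (1 / 4 : ℝ) * (ρ ^ 2)⁻¹ * (1 / 8) ≤ (1 - ρ) ^ 2 * (ρ ^ 2)⁻¹ * t₀ ^ 3 := by
        apply mul_le_mul (mul_le_mul_of_nonneg_right h14 (by positivity)) h18 (by norm_num)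
          (by positivity)
      calc (32 * ρ ^ 2)⁻¹ = (1 / 4 : ℝ) * (ρ ^ 2)⁻¹ * (1 / 8) := by
            rw [mul_inv]; ring
        _ ≤ (1 - ρ) ^ 2 * (ρ ^ 2)⁻¹ * t₀ ^ 3 := step
        _ = f ρ := rfl
    have hrpow : (f ρ) ^ (-(5 : ℝ) / 2) ≤ 32768 * ρ ^ 5 := by
      have hZ : (0 : ℝ) < 32 * ρ ^ 2 := by positivity
      calc (f ρ) ^ (-(5 : ℝ) / 2) ≤ ((32 * ρ ^ 2)⁻¹) ^ (-(5 : ℝ) / 2) :=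
            Real.rpow_le_rpow_of_nonpos (by positivity) hXlow (by norm_num)
        _ = (32 * ρ ^ 2) ^ ((5 : ℝ) / 2) := by
            rw [Real.inv_rpow hZ.le, ← Real.rpow_neg hZ.le]
            norm_num
        _ = (32 : ℝ) ^ ((5 : ℝ) / 2) * (ρ ^ 2 : ℝ) ^ ((5 : ℝ) / 2) :=
            Real.mul_rpow (by norm_num) (by positivity)
        _ ≤ 32768 * ρ ^ 5 := by
            have h32 : (32 : ℝ) ^ ((5 : ℝ) / 2) ≤ 32768 := by
              calc (32 : ℝ) ^ ((5 : ℝ) / 2) ≤ (32 : ℝ) ^ (3 : ℝ) :=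
                    Real.rpow_le_rpow_of_exponent_le (by norm_num) (by norm_num)
                _ = 32768 := by
                    rw [show (3 : ℝ) = ((3 : ℕ) : ℝ) by norm_num, Real.rpow_natCast]
                    norm_num
            have hρ5 : (ρ ^ 2 : ℝ) ^ ((5 : ℝ) / 2) = ρ ^ 5 := by
              rw [← Real.rpow_natCast ρ 2, ← Real.rpow_mul hρ1.le,
                show ((2 : ℕ) : ℝ) * ((5 : ℝ) / 2) = ((5 : ℕ) : ℝ) by norm_num,
                Real.rpow_natCast]
            rw [hρ5]
            exact mul_le_mul_of_nonneg_right h32 (by positivity)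
    have hscalar : |f' ρ| * (f ρ) ^ (-(5 : ℝ) / 2) ≤ 65536 * ρ ^ 2 := by
      have h1 : |f' ρ| * (f ρ) ^ (-(5 : ℝ) / 2) ≤ (2 * (ρ ^ 3)⁻¹) * (32768 * ρ ^ 5) :=
        mul_le_mul habs hrpow (Real.rpow_nonneg hfρ.le _) (by positivity)
      have h2 : (2 * (ρ ^ 3)⁻¹) * (32768 * ρ ^ 5) = 65536 * ρ ^ 2 := by
        field_simp
        ring
      linarith [h1, h2.le, h2.ge]
    rw [← ENNReal.ofReal_mul (abs_nonneg _), ← ENNReal.ofReal_mul (by norm_num : (0:ℝ) ≤ 65536)]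
    apply ENNReal.ofReal_le_ofReal
    calc |f' ρ| * (H (f ρ) * (f ρ) ^ (-(5 : ℝ) / 2))
        = H (f ρ) * (|f' ρ| * (f ρ) ^ (-(5 : ℝ) / 2)) := by ring
      _ ≤ H (f ρ) * (65536 * ρ ^ 2) := mul_le_mul_of_nonneg_left hscalar hH
      _ = 65536 * (H ((1 - ρ) ^ 2 * (ρ ^ 2)⁻¹ * t₀ ^ 3) * ρ ^ 2) := by
          rw [hfdef]; ring
  calc (∫⁻ s in Set.Ioi (1 : ℝ), ENNReal.ofReal (H s * s ^ (-(5 : ℝ) / 2)))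
      ≤ ∫⁻ s in f '' A, ENNReal.ofReal (H s * s ^ (-(5 : ℝ) / 2)) := lintegral_mono_set himg
    _ = ∫⁻ ρ in A, ENNReal.ofReal |f' ρ|
          * ENNReal.ofReal (H (f ρ) * (f ρ) ^ (-(5 : ℝ) / 2)) := key
    _ ≤ ∫⁻ ρ in A, ENNReal.ofReal 65536
          * ENNReal.ofReal (H ((1 - ρ) ^ 2 * (ρ ^ 2)⁻¹ * t₀ ^ 3) * ρ ^ 2) :=
        setLIntegral_mono' measurableSet_Ioo hpoint
    _ = ENNReal.ofReal 65536
          * ∫⁻ ρ in A, ENNReal.ofReal (H ((1 - ρ) ^ 2 * (ρ ^ 2)⁻¹ * t₀ ^ 3) * ρ ^ 2) :=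
        lintegral_const_mul' _ _ ENNReal.ofReal_ne_top
    _ < ⊤ := ENNReal.mul_lt_top ENNReal.ofReal_lt_top hG
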